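/- Under the stated assumptions, for all sufficiently large N one has ∑_{I ∈ 𝓘^N} |I| ≤ 2√ε · N. -/

import Mathlib

open Finset Filter

open scoped Classical in
/-- The collection `𝓘^N` of maximal subintervals of `{1,…,N}` on which the gaps `g n` are at
most `1/2`, encoded as the set of pairs `(p, q)` of endpoints, `1 ≤ p ≤ q ≤ N`. -/
noncomputable def maximalIntervals (g : ℕ → ℝ) (N : ℕ) : Finset (ℕ × ℕ) :=
  (Finset.Icc 1 N ×ˢ Finset.Icc 1 N).filter fun pq =>
    pq.1 ≤ pq.2 ∧ (∀ n ∈ Finset.Icc pq.1 pq.2, g n ≤ 1 / 2) ∧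
      (pq.1 = 1 ∨ 1 / 2 < g (pq.1 - 1)) ∧ (pq.2 = N ∨ 1 / 2 < g (pq.2 + 1))

private lemma gauss_sum_real (n : ℕ) : (∑ i ∈ Finset.range n, (i:ℝ)) = n * (n-1) / 2 := by
  induction n with
  | zero => simp
  | succ m ih =>
      rw [Finset.sum_range_succ, ih]
      push_cast
      ring

set_option maxHeartbeats 1000000 in
private lemma alg_bound (ε ε' η : ℝ) (K : ℕ) (hη : 0 < η) (hη1 : η ≤ 1)
    (hKη : (K:ℝ) * η = 1 + ε) (hε0 : 0 ≤ ε) (hε1 : ε ≤ 1) (hε'0 : 0 ≤ ε') (hε'1 : ε' ≤ 1)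
    (β : ℝ) (hβ0 : 0 ≤ β) (hβ1 : β ≤ 1) :
    η * ∑ k ∈ Finset.range K, min β (1 + ε + ε' - k * η) ≤
      β * (1 + ε) - β^2/2 + 2*ε' + 5*η := by
  set θ : ℝ := 1 + ε + ε' - β with hθdef
  have hθ0 : 0 ≤ θ := by simp only [hθdef]; linarith
  set k₁ : ℕ := min K ⌈θ/η⌉₊ with hk₁def
  have hk₁K : k₁ ≤ K := min_le_left _ _
  have hlt : ∀ k < k₁, (k:ℝ) * η < θ := by
    intro k hk
    have h1 : k < ⌈θ/η⌉₊ := lt_of_lt_of_le hk (min_le_right _ _)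
    have h2 : (k:ℝ) < θ/η := Nat.lt_ceil.mp h1
    calc (k:ℝ) * η < (θ/η) * η := mul_lt_mul_of_pos_right h2 hη
    _ = θ := div_mul_cancel₀ _ (ne_of_gt hη)
  have hsplit : ∑ k ∈ Finset.range K, min β (1 + ε + ε' - k * η)
      = ∑ k ∈ Finset.range k₁, min β (1 + ε + ε' - k * η)
        + ∑ k ∈ Finset.Ico k₁ K, min β (1 + ε + ε' - k * η) := by
    rw [Finset.range_eq_Ico, ← Finset.sum_Ico_consecutive _ (Nat.zero_le k₁) hk₁K,
      ← Finset.range_eq_Ico]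
  have hfirst : ∑ k ∈ Finset.range k₁, min β (1 + ε + ε' - k * η) = (k₁:ℝ) * β := by
    rw [Finset.sum_congr rfl (fun k hk => ?_), Finset.sum_const, Finset.card_range,
      nsmul_eq_mul]
    have := hlt k (Finset.mem_range.mp hk)
    exact min_eq_left (by simp only [hθdef] at this; linarith)
  have hsecond : ∑ k ∈ Finset.Ico k₁ K, min β (1 + ε + ε' - k * η)
      ≤ ∑ k ∈ Finset.Ico k₁ K, (1 + ε + ε' - k * η) :=
    Finset.sum_le_sum fun k _ => min_le_right _ _
  have hIco : ∑ k ∈ Finset.Ico k₁ K, (1 + ε + ε' - (k:ℝ) * η)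
      = ((K:ℝ) - k₁) * (1 + ε + ε') - η * (((K:ℝ)*((K:ℝ)-1) - (k₁:ℝ)*((k₁:ℝ)-1))/2) := by
    rw [Finset.sum_Ico_eq_sub _ hk₁K]
    have h1 : ∀ n : ℕ, ∑ k ∈ Finset.range n, (1 + ε + ε' - (k:ℝ) * η)
        = n * (1 + ε + ε') - η * ((n:ℝ)*((n:ℝ)-1)/2) := by
      intro n
      rw [Finset.sum_sub_distrib, Finset.sum_const, Finset.card_range, nsmul_eq_mul]
      rw [show ∑ k ∈ Finset.range n, (k:ℝ) * η = (∑ k ∈ Finset.range n, (k:ℝ)) * η by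
        rw [Finset.sum_mul]]
      rw [gauss_sum_real]
      ring
    rw [h1, h1]; ring
  set x : ℝ := (k₁:ℝ) * η with hxdef
  set y : ℝ := (K:ℝ) * η with hydef
  have hy : y = 1 + ε := hKη
  have hx0 : 0 ≤ x := by positivity
  have hxy : x ≤ y := by
    apply mul_le_mul_of_nonneg_right _ hη.le
    exact_mod_cast hk₁K
  have hy2 : y ≤ 2 := by rw [hy]; linarith
  have hstep : η * ∑ k ∈ Finset.Ico k₁ K, min β (1 + ε + ε' - k * η)
      ≤ η * (((K:ℝ) - k₁) * (1 + ε + ε')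
          - η * (((K:ℝ)*((K:ℝ)-1) - (k₁:ℝ)*((k₁:ℝ)-1))/2)) :=
    mul_le_mul_of_nonneg_left (hsecond.trans_eq hIco) hη.le
  have htot : η * ∑ k ∈ Finset.range K, min β (1 + ε + ε' - k * η)
      ≤ x * β + (y - x)*(1+ε+ε') - (y*(y-η) - x*(x-η))/2 := by
    rw [hsplit, hfirst, mul_add]
    have heq : η * ((k₁:ℝ) * β) + η * (((K:ℝ) - k₁) * (1 + ε + ε')
        - η * (((K:ℝ)*((K:ℝ)-1) - (k₁:ℝ)*((k₁:ℝ)-1))/2))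
        = x * β + (y - x)*(1+ε+ε') - (y*(y-η) - x*(x-η))/2 := by
      simp only [hxdef, hydef]; ring
    linarith [hstep]
  rcases le_or_gt (⌈θ/η⌉₊ : ℕ) K with hcase | hcase
  · -- main case : k₁ = ⌈θ/η⌉₊, θ ≤ x ≤ θ + η
    have hk₁ : k₁ = ⌈θ/η⌉₊ := min_eq_right hcase
    have hθx : θ ≤ x := by
      rw [hxdef, hk₁]
      have h0 := Nat.le_ceil (θ/η)
      calc θ = (θ/η) * η := (div_mul_cancel₀ _ (ne_of_gt hη)).symm
        _ ≤ (⌈θ/η⌉₊:ℝ) * η := mul_le_mul_of_nonneg_right h0 hη.le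
    have hxθ : x ≤ θ + η := by
      rw [hxdef, hk₁]
      have h1 : (⌈θ/η⌉₊:ℝ) < θ/η + 1 := Nat.ceil_lt_add_one (by positivity)
      calc (⌈θ/η⌉₊:ℝ) * η ≤ (θ/η + 1) * η := mul_le_mul_of_nonneg_right h1.le hη.le
        _ = θ + η := by rw [add_mul, div_mul_cancel₀ _ (ne_of_gt hη), one_mul]
    have hid : x * β + (y - x)*(1+ε+ε') - (y*(y-η) - x*(x-η))/2
        = β * y - β^2/2 + β*ε' - ε'^2/2 + (x - θ)^2/2 + η*(y-x)/2 := by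
      have h1 : (1:ℝ) + ε = y := hy.symm
      rw [hθdef, ← h1]
      ring
    have hb1 : β * ε' ≤ ε' := mul_le_of_le_one_left hε'0 hβ1
    have hb2 : (x - θ)^2 ≤ η^2 := by nlinarith
    have hb3 : η^2 ≤ η := by nlinarith
    have hb4 : η * (y - x) ≤ 2*η := by nlinarith
    have hyy : β * y = β * (1+ε) := by rw [hy]
    clear_value x y θ k₁
    have hfin : β * y - β^2/2 + β*ε' - ε'^2/2 + (x - θ)^2/2 + η*(y-x)/2
        ≤ β * (1+ε) - β^2/2 + 2*ε' + 5*η := by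
      have := sq_nonneg ε'
      linarith
    linarith [htot, hid.le, hid.ge]
  · -- boundary case : k₁ = K, y < θ, so β < ε'
    have hk₁ : k₁ = K := min_eq_left hcase.le
    have hxeq : x = y := by rw [hxdef, hydef, hk₁]
    have hyθ : y < θ := by
      have h2 : (K:ℝ) < θ/η := Nat.lt_ceil.mp hcase
      calc y = (K:ℝ) * η := hydef
        _ < (θ/η) * η := mul_lt_mul_of_pos_right h2 hη
        _ = θ := div_mul_cancel₀ _ (ne_of_gt hη)
    have hβε' : β < ε' := by
      rw [hθdef] at hyθ; rw [hy] at hyθ; linarith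
    have hyβ : x * β + (y - x)*(1+ε+ε') - (y*(y-η) - x*(x-η))/2 = y * β := by
      rw [hxeq]; ring
    rw [hyβ] at htot
    have hsq : β^2 ≤ ε' := by nlinarith
    have heq2 : y * β = β * (1+ε) := by rw [hy]; ring
    rw [heq2] at htot
    clear_value x y θ k₁
    nlinarith [htot]

open scoped Classical in
private lemma sum_maximalIntervals_le (g : ℕ → ℝ) (N : ℕ) (t : Finset ℕ)
    (ht : ∀ n, n ∈ Finset.Icc 1 N → g n ≤ 1 / 2 → n ∈ t) :
    ∑ pq ∈ maximalIntervals g N, (pq.2 - pq.1 + 1) ≤ t.card := by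
  have hmem : ∀ pq ∈ maximalIntervals g N,
      (1 ≤ pq.1 ∧ pq.1 ≤ N) ∧ (1 ≤ pq.2 ∧ pq.2 ≤ N) ∧ pq.1 ≤ pq.2 ∧
        (∀ n ∈ Finset.Icc pq.1 pq.2, g n ≤ 1 / 2) ∧
        (pq.1 = 1 ∨ 1 / 2 < g (pq.1 - 1)) ∧ (pq.2 = N ∨ 1 / 2 < g (pq.2 + 1)) := by
    intro pq h
    obtain ⟨hmem, hprop⟩ := Finset.mem_filter.mp h
    obtain ⟨h1, h2⟩ := Finset.mem_product.mp hmem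
    exact ⟨Finset.mem_Icc.mp h1, Finset.mem_Icc.mp h2, hprop⟩
  have hleft : ∀ a b : ℕ × ℕ, a ∈ maximalIntervals g N → b ∈ maximalIntervals g N →
      ∀ n : ℕ, (a.1 ≤ n ∧ n ≤ a.2) → (b.1 ≤ n ∧ n ≤ b.2) → ¬ a.1 < b.1 := by
    intro a b ha hb n hna hnb hab
    obtain ⟨⟨ha1, _⟩, _, _, hasmall, _, _⟩ := hmem a ha
    obtain ⟨_, _, _, _, hbL, _⟩ := hmem b hb
    have h1 : b.1 - 1 ∈ Finset.Icc a.1 a.2 := Finset.mem_Icc.mpr (by omega)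
    have h2 := hasmall _ h1
    rcases hbL with h3 | h3
    · omega
    · linarith
  have hright : ∀ a b : ℕ × ℕ, a ∈ maximalIntervals g N → b ∈ maximalIntervals g N →
      ∀ n : ℕ, (a.1 ≤ n ∧ n ≤ a.2) → (b.1 ≤ n ∧ n ≤ b.2) → ¬ a.2 < b.2 := by
    intro a b ha hb n hna hnb hab
    obtain ⟨_, ⟨_, ha2N⟩, _, _, _, haR⟩ := hmem a ha
    obtain ⟨_, ⟨_, hb2N⟩, _, hbsmall, _, _⟩ := hmem b hb
    have h1 : a.2 + 1 ∈ Finset.Icc b.1 b.2 := Finset.mem_Icc.mpr (by omega)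
    have h2 := hbsmall _ h1
    rcases haR with h3 | h3
    · omega
    · linarith
  have hdisj : ∀ x ∈ maximalIntervals g N, ∀ y ∈ maximalIntervals g N, x ≠ y →
      Disjoint (Finset.Icc x.1 x.2) (Finset.Icc y.1 y.2) := by
    intro x hx y hy hxy
    by_contra hnd
    obtain ⟨n, hnx, hny⟩ := Finset.not_disjoint_iff.mp hnd
    rw [Finset.mem_Icc] at hnx hny
    have e1 : x.1 = y.1 := by
      have := hleft x y hx hy n hnx hny
      have := hleft y x hy hx n hny hnx
      omega
    have e2 : x.2 = y.2 := by
      have := hright x y hx hy n hnx hny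
      have := hright y x hy hx n hny hnx
      omega
    exact hxy (Prod.ext e1 e2)
  calc ∑ pq ∈ maximalIntervals g N, (pq.2 - pq.1 + 1)
      = ∑ pq ∈ maximalIntervals g N, (Finset.Icc pq.1 pq.2).card := by
        refine Finset.sum_congr rfl fun pq h => ?_
        have hle := (hmem pq h).2.2.1
        rw [Nat.card_Icc]
        omega
    _ = ((maximalIntervals g N).biUnion fun pq => Finset.Icc pq.1 pq.2).card :=
        (Finset.card_biUnion hdisj).symm
    _ ≤ t.card := by
        apply Finset.card_le_card
        intro n hn
        obtain ⟨pq, hpq, hnpq⟩ := Finset.mem_biUnion.mp hn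
        obtain ⟨⟨hp1, hpN⟩, ⟨hq1, hqN⟩, _, hsmall, _, _⟩ := hmem pq hpq
        rw [Finset.mem_Icc] at hnpq
        exact ht n (Finset.mem_Icc.mpr ⟨by omega, by omega⟩)
          (hsmall n (Finset.mem_Icc.mpr hnpq))

private lemma min_helper (b l n : ℝ) (hn : 0 < n) (hb : 0 ≤ b) :
    min b (l * n + 1) ≤ n * min (b/n) l + 1 := by
  rcases le_total (b/n) l with h | h
  · rw [min_eq_left h]
    have he : n * (b/n) = b := by field_simp
    rw [he]
    exact (min_le_left _ _).trans (by linarith)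
  · rw [min_eq_right h]
    calc min b (l*n+1) ≤ l*n+1 := min_le_right _ _
      _ = n*l + 1 := by ring

set_option maxHeartbeats 2000000 in
open scoped Classical in
/-- Let `(λ_n)` be strictly increasing with average gap `1` and Poisson pair correlations,
let `ε = 10⁻⁹`, and suppose `g n := λ_{n+1} − λ_n ≤ 3/2 + ε` for all `n ≥ 1`. Then for all
sufficiently large `N`, `∑_{I ∈ 𝓘^N} |I| ≤ 2√ε · N`. -/
theorem stmt_8 (lam : ℕ → ℝ) (g : ℕ → ℝ) (hgdef : ∀ n, g n = lam (n + 1) - lam n)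
    (hmono : ∀ n, 1 ≤ n → lam n < lam (n + 1))
    (havg : Tendsto (fun N : ℕ => (∑ n ∈ Finset.Icc 1 N, g n) / N) atTop (nhds 1))
    (hppc : ∀ I : Set ℝ, I.OrdConnected → Bornology.IsBounded I →
      Tendsto (fun N : ℕ =>
          (((Finset.Icc 1 N ×ˢ Finset.Icc 1 N).filter
            (fun p => p.1 ≠ p.2 ∧ lam p.2 - lam p.1 ∈ I)).card : ℝ) / N)
        atTop (nhds (MeasureTheory.volume I).toReal))
    (ε : ℝ) (hε : ε = 1 / 10 ^ 9)
    (hgap : ∀ n, 1 ≤ n → g n ≤ 3 / 2 + ε) :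
    ∀ᶠ N : ℕ in atTop,
      ∑ pq ∈ maximalIntervals g N, ((pq.2 - pq.1 + 1 : ℕ) : ℝ)
        ≤ 2 * Real.sqrt ε * N := by
  classical
  have hε0 : (0:ℝ) < ε := by rw [hε]; norm_num
  have hε1 : ε ≤ 1 := by rw [hε]; norm_num
  set K : ℕ := ⌈(40:ℝ)/ε⌉₊ with hKdef
  have hK40 : (40:ℝ)/ε ≤ K := Nat.le_ceil _
  have hKpos : 0 < K := Nat.ceil_pos.mpr (by positivity)
  have hKR : (0:ℝ) < K := by exact_mod_cast hKpos
  set η : ℝ := (1+ε)/K with hηdef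
  have hηpos : 0 < η := div_pos (by linarith) hKR
  have hKη : (K:ℝ) * η = 1 + ε := by
    rw [hηdef]; field_simp
  have hη20 : η ≤ ε/20 := by
    have h1 : (1+ε)/(K:ℝ) ≤ (1+ε)/((40:ℝ)/ε) :=
      div_le_div_of_nonneg_left (by linarith) (by positivity) hK40
    have h2 : (1+ε)/((40:ℝ)/ε) = (1+ε)*ε/40 := div_div_eq_mul_div _ _ _
    nlinarith [h1, h2]
  have hη1 : η ≤ 1 := by linarith
  -- volume computation
  have hvol : ∀ k : ℕ, k < K →
      (MeasureTheory.volume (Set.Ioc (1/2 + (k:ℝ)*η) (3/2+ε))).toReal = 1 + ε - (k:ℝ)*η := by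
    intro k hk
    have hkK : (k:ℝ) ≤ (K:ℝ) - 1 := by
      have : ((k:ℝ) + 1) ≤ (K:ℝ) := by exact_mod_cast Nat.succ_le_of_lt hk
      linarith
    have hkη : (k:ℝ)*η ≤ 1 + ε - η := by
      have := mul_le_mul_of_nonneg_right hkK hηpos.le
      nlinarith [hKη]
    rw [Real.volume_Ioc, ENNReal.toReal_ofReal (by linarith)]
    ring
  -- eventual bounds from PPC, one for each threshold
  have hEk : ∀ k ∈ Finset.range K, ∀ᶠ N : ℕ in atTop,
      (((Finset.Icc 1 N ×ˢ Finset.Icc 1 N).filter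
        (fun p => p.1 ≠ p.2 ∧ lam p.2 - lam p.1 ∈ Set.Ioc (1/2 + (k:ℝ)*η) (3/2+ε))).card : ℝ) / N
        < 1 + ε - (k:ℝ)*η + ε/8 := by
    intro k hk
    have h := hppc (Set.Ioc (1/2 + (k:ℝ)*η) (3/2+ε)) Set.ordConnected_Ioc
      ((Metric.isBounded_Icc _ _).subset Set.Ioc_subset_Icc_self)
    rw [hvol k (Finset.mem_range.mp hk)] at h
    have h2 := h.eventually_lt_const (show (1:ℝ) + ε - (k:ℝ)*η < 1 + ε - (k:ℝ)*η + ε/8 by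
      linarith)
    refine h2.mono fun M hM => ?_
    convert hM using 4
    · exact rfl
    · congr
  have hEavg : ∀ᶠ N : ℕ in atTop, 1 - ε/8 < (∑ n ∈ Finset.Icc 1 N, g n) / N :=
    havg.eventually_const_lt (by linarith)
  have hE1 : ∀ᶠ N : ℕ in atTop, 1 ≤ N := eventually_ge_atTop 1
  have hE8 : ∀ᶠ N : ℕ in atTop, (8:ℝ)/ε ≤ (N:ℕ) :=
    (tendsto_natCast_atTop_atTop (R := ℝ)).eventually_ge_atTop _
  filter_upwards [hE1, hE8, hEavg, (Filter.eventually_all_finset (Finset.range K)).mpr hEk]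
    with N hN1 hN8 havgN hcnt
  have hN0 : (0:ℝ) < N := by
    have : (1:ℝ) ≤ N := by exact_mod_cast hN1
    linarith
  -- split Icc 1 N according to small/large gaps
  have hScard : (Finset.Icc 1 N).card = N := by rw [Nat.card_Icc]; omega
  have hABN : ((Finset.Icc 1 N).filter (fun n => g n ≤ 1/2)).card
      + ((Finset.Icc 1 N).filter (fun n => ¬ (g n ≤ 1/2))).card = N := by
    rw [Finset.card_filter_add_card_filter_not, hScard]
  set A : ℝ := (((Finset.Icc 1 N).filter (fun n => g n ≤ 1/2)).card : ℝ) with hAdef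
  set B : ℝ := (((Finset.Icc 1 N).filter (fun n => ¬ (g n ≤ 1/2))).card : ℝ) with hBdef
  have hABr : A + B = N := by rw [hAdef, hBdef]; exact_mod_cast hABN
  have hA0 : 0 ≤ A := by rw [hAdef]; positivity
  have hB0 : 0 ≤ B := by rw [hBdef]; positivity
  have hBN : B ≤ N := by linarith
  -- pointwise layer cake bound
  have hpt : ∀ n ∈ (Finset.Icc 1 N).filter (fun n => ¬ (g n ≤ 1/2)),
      g n ≤ 1/2 + η * (((Finset.range K).filter (fun k : ℕ => 1/2 + (k:ℝ)*η < g n)).card : ℝ) := by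
    intro n hn
    obtain ⟨hnS, hng⟩ := Finset.mem_filter.mp hn
    rw [Finset.mem_Icc] at hnS
    push_neg at hng
    have hgub := hgap n hnS.1
    by_cases hall : ∀ k ∈ Finset.range K, 1/2 + (k:ℝ)*η < g n
    · rw [Finset.filter_true_of_mem hall, Finset.card_range]
      nlinarith [hKη]
    · push_neg at hall
      obtain ⟨k', hk'K, hk'⟩ := hall
      have hex : ∃ k : ℕ, g n ≤ 1/2 + (k:ℝ)*η := ⟨k', hk'⟩
      have hk₀spec : g n ≤ 1/2 + ((Nat.find hex : ℕ):ℝ)*η := Nat.find_spec hex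
      have hk₀le : Nat.find hex ≤ k' := Nat.find_min' hex hk'
      have hsub : Finset.range (Nat.find hex) ⊆
          (Finset.range K).filter (fun k : ℕ => 1/2 + (k:ℝ)*η < g n) := by
        intro j hj
        rw [Finset.mem_range] at hj
        refine Finset.mem_filter.mpr ⟨Finset.mem_range.mpr ?_, ?_⟩
        · have := Finset.mem_range.mp hk'K; omega
        · exact not_le.mp (Nat.find_min hex hj)
      have hcard : ((Nat.find hex : ℕ):ℝ)
          ≤ (((Finset.range K).filter (fun k : ℕ => 1/2 + (k:ℝ)*η < g n)).card : ℝ) := by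
        have h := Finset.card_le_card hsub
        rw [Finset.card_range] at h
        exact_mod_cast h
      have := mul_le_mul_of_nonneg_right hcard hηpos.le
      linarith
  -- swap the double counting
  have hswap : ∑ n ∈ (Finset.Icc 1 N).filter (fun n => ¬ (g n ≤ 1/2)),
        (((Finset.range K).filter (fun k : ℕ => 1/2 + (k:ℝ)*η < g n)).card : ℕ)
      = ∑ k ∈ Finset.range K,
        ((((Finset.Icc 1 N).filter (fun n => ¬ (g n ≤ 1/2))).filter
          (fun n => 1/2 + (k:ℝ)*η < g n)).card : ℕ) := by
    simp_rw [Finset.card_filter]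
    exact Finset.sum_comm
  have hSb_sum : ∑ n ∈ (Finset.Icc 1 N).filter (fun n => ¬ (g n ≤ 1/2)), g n
      ≤ B*(1/2) + η * ∑ k ∈ Finset.range K,
          ((((Finset.Icc 1 N).filter (fun n => ¬ (g n ≤ 1/2))).filter
            (fun n => 1/2 + (k:ℝ)*η < g n)).card : ℝ) := by
    have h1 := Finset.sum_le_sum hpt
    have h2 : ∑ n ∈ (Finset.Icc 1 N).filter (fun n => ¬ (g n ≤ 1/2)),
        (1/2 + η * (((Finset.range K).filter (fun k : ℕ => 1/2 + (k:ℝ)*η < g n)).card : ℝ))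
        = B*(1/2) + η * ∑ n ∈ (Finset.Icc 1 N).filter (fun n => ¬ (g n ≤ 1/2)),
            (((Finset.range K).filter (fun k : ℕ => 1/2 + (k:ℝ)*η < g n)).card : ℝ) := by
      rw [Finset.sum_add_distrib, Finset.sum_const, nsmul_eq_mul, ← Finset.mul_sum, hBdef]
    have h3 : ∑ n ∈ (Finset.Icc 1 N).filter (fun n => ¬ (g n ≤ 1/2)),
        (((Finset.range K).filter (fun k : ℕ => 1/2 + (k:ℝ)*η < g n)).card : ℝ)
        = ∑ k ∈ Finset.range K,
          ((((Finset.Icc 1 N).filter (fun n => ¬ (g n ≤ 1/2))).filter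
            (fun n => 1/2 + (k:ℝ)*η < g n)).card : ℝ) := by
      exact_mod_cast hswap
    rw [h2, h3] at h1
    exact h1
  -- per-threshold count bound via PPC
  have hDk : ∀ k ∈ Finset.range K,
      ((((Finset.Icc 1 N).filter (fun n => ¬ (g n ≤ 1/2))).filter
        (fun n => 1/2 + (k:ℝ)*η < g n)).card : ℝ)
      ≤ min B ((1 + ε + ε/8 - (k:ℝ)*η) * N + 1) := by
    intro k hk
    refine le_min ?_ ?_
    · rw [hBdef]
      exact_mod_cast Finset.card_le_card (Finset.filter_subset _ _)
    · have hsub1 : ((Finset.Icc 1 N).filter (fun n => ¬ (g n ≤ 1/2))).filter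
          (fun n => 1/2 + (k:ℝ)*η < g n)
          ⊆ (Finset.Icc 1 N).filter (fun n => 1/2 + (k:ℝ)*η < g n) :=
        Finset.filter_subset_filter _ (Finset.filter_subset _ _)
      have hsub2 : (Finset.Icc 1 N).filter (fun n => 1/2 + (k:ℝ)*η < g n)
          ⊆ insert N ((Finset.Icc 1 (N-1)).filter (fun n => 1/2 + (k:ℝ)*η < g n)) := by
        intro n hn
        obtain ⟨hnS, hnP⟩ := Finset.mem_filter.mp hn
        rw [Finset.mem_Icc] at hnS
        rcases eq_or_ne n N with rfl | hne
        · exact Finset.mem_insert_self _ _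
        · exact Finset.mem_insert_of_mem (Finset.mem_filter.mpr
            ⟨Finset.mem_Icc.mpr ⟨hnS.1, by omega⟩, hnP⟩)
      have hinj : ((Finset.Icc 1 (N-1)).filter (fun n => 1/2 + (k:ℝ)*η < g n)).card ≤
          ((Finset.Icc 1 N ×ˢ Finset.Icc 1 N).filter
            (fun p => p.1 ≠ p.2 ∧ lam p.2 - lam p.1 ∈ Set.Ioc (1/2 + (k:ℝ)*η) (3/2+ε))).card := by
        apply Finset.card_le_card_of_injOn (fun n => (n, n+1))
        · intro n hn
          obtain ⟨hnI, hnP⟩ := Finset.mem_filter.mp hn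
          rw [Finset.mem_Icc] at hnI
          dsimp only
          refine Finset.mem_filter.mpr ⟨Finset.mem_product.mpr
            ⟨Finset.mem_Icc.mpr ⟨by omega, by omega⟩, Finset.mem_Icc.mpr ⟨by omega, by omega⟩⟩,
            by omega, ?_⟩
          rw [← hgdef n]
          exact Set.mem_Ioc.mpr ⟨hnP, hgap n hnI.1⟩
        · intro a _ b _ hab
          exact (Prod.ext_iff.mp hab).1
      have hppcN : (((Finset.Icc 1 N ×ˢ Finset.Icc 1 N).filter
            (fun p => p.1 ≠ p.2 ∧ lam p.2 - lam p.1 ∈ Set.Ioc (1/2 + (k:ℝ)*η) (3/2+ε))).card : ℝ)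
          ≤ (1 + ε - (k:ℝ)*η + ε/8) * N := by
        have h := (div_lt_iff₀ hN0).mp (hcnt k hk)
        linarith
      have hc1 : (((Finset.Icc 1 N).filter (fun n => ¬ (g n ≤ 1/2))).filter
            (fun n => 1/2 + (k:ℝ)*η < g n)).card
          ≤ ((Finset.Icc 1 (N-1)).filter (fun n => 1/2 + (k:ℝ)*η < g n)).card + 1 := by
        have c1 := Finset.card_le_card (hsub1.trans hsub2)
        have c2 := Finset.card_insert_le N ((Finset.Icc 1 (N-1)).filter
          (fun n => 1/2 + (k:ℝ)*η < g n))
        omega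
      have hc2 : (((Finset.Icc 1 N).filter (fun n => ¬ (g n ≤ 1/2))).filter
            (fun n => 1/2 + (k:ℝ)*η < g n)).card ≤
          ((Finset.Icc 1 N ×ˢ Finset.Icc 1 N).filter
            (fun p => p.1 ≠ p.2 ∧ lam p.2 - lam p.1 ∈ Set.Ioc (1/2 + (k:ℝ)*η) (3/2+ε))).card + 1 := by
        omega
      have hc2R : ((((Finset.Icc 1 N).filter (fun n => ¬ (g n ≤ 1/2))).filter
            (fun n => 1/2 + (k:ℝ)*η < g n)).card : ℝ) ≤
          (((Finset.Icc 1 N ×ˢ Finset.Icc 1 N).filter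
            (fun p => p.1 ≠ p.2 ∧ lam p.2 - lam p.1 ∈ Set.Ioc (1/2 + (k:ℝ)*η) (3/2+ε))).card : ℝ) + 1 := by
        exact_mod_cast hc2
      linarith
  -- combine min bounds with the algebra lemma
  set β : ℝ := B / N with hβdef
  have hβ0 : 0 ≤ β := by rw [hβdef]; exact div_nonneg hB0 hN0.le
  have hβ1 : β ≤ 1 := by
    rw [hβdef]
    exact div_le_one_of_le₀ hBN hN0.le
  have hNβ : (N:ℝ) * β = B := by
    rw [hβdef]; field_simp
  have hmin : ∀ k : ℕ, min B ((1 + ε + ε/8 - (k:ℝ)*η) * N + 1)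
      ≤ (N:ℝ) * min β (1 + ε + ε/8 - (k:ℝ)*η) + 1 := by
    intro k
    rw [hβdef]
    exact min_helper B (1 + ε + ε/8 - (k:ℝ)*η) N hN0 hB0
  have halg := alg_bound ε (ε/8) η K hηpos hη1 hKη hε0.le hε1 (by linarith) (by linarith)
    β hβ0 hβ1
  have hchain : η * ∑ k ∈ Finset.range K,
        ((((Finset.Icc 1 N).filter (fun n => ¬ (g n ≤ 1/2))).filter
          (fun n => 1/2 + (k:ℝ)*η < g n)).card : ℝ)
      ≤ (N:ℝ) * (η * ∑ k ∈ Finset.range K, min β (1 + ε + ε/8 - (k:ℝ)*η)) + (1+ε) := by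
    have s1 : ∑ k ∈ Finset.range K,
        ((((Finset.Icc 1 N).filter (fun n => ¬ (g n ≤ 1/2))).filter
          (fun n => 1/2 + (k:ℝ)*η < g n)).card : ℝ)
        ≤ ∑ k ∈ Finset.range K, ((N:ℝ) * min β (1 + ε + ε/8 - (k:ℝ)*η) + 1) :=
      Finset.sum_le_sum (fun k hk => (hDk k hk).trans (hmin k))
    have s2 : ∑ k ∈ Finset.range K, ((N:ℝ) * min β (1 + ε + ε/8 - (k:ℝ)*η) + 1)
        = (N:ℝ) * ∑ k ∈ Finset.range K, min β (1 + ε + ε/8 - (k:ℝ)*η) + K := by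
      rw [Finset.sum_add_distrib, Finset.sum_const, Finset.card_range, nsmul_eq_mul,
        mul_one, ← Finset.mul_sum]
    calc η * ∑ k ∈ Finset.range K,
          ((((Finset.Icc 1 N).filter (fun n => ¬ (g n ≤ 1/2))).filter
            (fun n => 1/2 + (k:ℝ)*η < g n)).card : ℝ)
        ≤ η * ((N:ℝ) * ∑ k ∈ Finset.range K, min β (1 + ε + ε/8 - (k:ℝ)*η) + K) :=
          mul_le_mul_of_nonneg_left (s1.trans_eq s2) hηpos.le
      _ = (N:ℝ) * (η * ∑ k ∈ Finset.range K, min β (1 + ε + ε/8 - (k:ℝ)*η)) + (K:ℝ)*η := by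
          ring
      _ = (N:ℝ) * (η * ∑ k ∈ Finset.range K, min β (1 + ε + ε/8 - (k:ℝ)*η)) + (1+ε) := by
          rw [hKη]
  -- lower bound for the total sum of gaps
  have hg1 : (1 - ε/8) * N ≤ ∑ n ∈ Finset.Icc 1 N, g n := by
    have := (lt_div_iff₀ hN0).mp havgN
    linarith
  have hsplitS : ∑ n ∈ Finset.Icc 1 N, g n
      = ∑ n ∈ (Finset.Icc 1 N).filter (fun n => g n ≤ 1/2), g n
        + ∑ n ∈ (Finset.Icc 1 N).filter (fun n => ¬ (g n ≤ 1/2)), g n :=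
    (Finset.sum_filter_add_sum_filter_not _ _ _).symm
  have hSa_sum : ∑ n ∈ (Finset.Icc 1 N).filter (fun n => g n ≤ 1/2), g n ≤ A*(1/2) := by
    have h := Finset.sum_le_card_nsmul ((Finset.Icc 1 N).filter (fun n => g n ≤ 1/2)) g (1/2)
      (fun n hn => (Finset.mem_filter.mp hn).2)
    rw [nsmul_eq_mul] at h
    rw [hAdef]
    exact h
  have halgN := mul_le_mul_of_nonneg_left halg hN0.le
  have htotal : (1 - ε/8) * N ≤ A*(1/2) + B*(1/2)
      + ((N:ℝ) * (β*(1+ε) - β^2/2 + 2*(ε/8) + 5*η) + (1+ε)) := by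
    linarith
  -- final algebra
  have hN8' : (1:ℝ) + ε ≤ (ε/4)*N := by
    have h1 : (ε/4)*((8:ℝ)/ε) ≤ (ε/4)*N := mul_le_mul_of_nonneg_left hN8 (by positivity)
    have h2 : (ε/4)*((8:ℝ)/ε) = 2 := by field_simp; ring
    linarith
  have hβα : β = 1 - A/N := by
    rw [hβdef]
    field_simp
    linarith
  have hα0 : 0 ≤ A/N := by positivity
  have hdiv : (1 - ε/8) ≤ 1/2 + (β*(1+ε) - β^2/2 + 2*(ε/8) + 5*η) + ε/4 := by
    have hmul : (1-ε/8)*N ≤ (1/2 + (β*(1+ε) - β^2/2 + 2*(ε/8) + 5*η) + ε/4)*N := by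
      nlinarith [htotal, hN8', hABr]
    exact le_of_mul_le_mul_right (by linarith) hN0
  have hquad : (A/N)^2 ≤ 4*ε := by
    rw [hβα] at hdiv
    nlinarith [hη20, hα0, hε0.le, mul_nonneg hα0 hε0.le]
  have hsqrt : A/N ≤ 2*Real.sqrt ε := by
    have h1 := Real.sqrt_le_sqrt hquad
    rw [Real.sqrt_sq hα0] at h1
    have h2 : Real.sqrt (4*ε) = 2*Real.sqrt ε := by
      rw [show (4:ℝ)*ε = 2^2*ε by norm_num, Real.sqrt_mul (by positivity), Real.sqrt_sq (by norm_num : (0:ℝ) ≤ 2)]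
    linarith [h2.le, h2.ge]
  have hfin : A ≤ 2*Real.sqrt ε * N := by
    have := mul_le_mul_of_nonneg_right hsqrt hN0.le
    rw [div_mul_cancel₀ _ (ne_of_gt hN0)] at this
    linarith
  -- conclude via the combinatorial lemma
  have hcomb := sum_maximalIntervals_le g N
    ((Finset.Icc 1 N).filter (fun n => g n ≤ 1/2))
    (fun n hn hg => Finset.mem_filter.mpr ⟨hn, hg⟩)
  calc ∑ pq ∈ maximalIntervals g N, ((pq.2 - pq.1 + 1 : ℕ) : ℝ)
      = ((∑ pq ∈ maximalIntervals g N, (pq.2 - pq.1 + 1) : ℕ) : ℝ) := by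
        rw [Nat.cast_sum]
    _ ≤ A := by rw [hAdef]; exact_mod_cast hcomb
    _ ≤ 2 * Real.sqrt ε * N := hfin
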